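/- Fix a constant input vector I ∈ ℝ^N and A ∈ ℝ, and define V(x) = Σ_{i=1}^N [ (x_i − A·I_i)²/2 − g·x_i·Σ_{j=1}^N F(ω_ij)·sgn(x_j) ], where sgn is the sign function. Then at every point x ∈ ℝ^N with x_j ≠ 0 for all j, V is differentiable and ∂V/∂x_i (x) = −( −x_i + g·Σ_{j=1}^N F(ω_ij)·sgn(x_j) + A·I_i ) for every i; that is, on each open orthant the Hopfield network with step activation is the gradient system dx_i/dt = −∂V/∂x_i. -/

import Mathlib

open Real

noncomputable def F (lam s : ℝ) : ℝ := (2 / Real.pi) * Real.arctan (lam * Real.pi * s / 2)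

noncomputable def V (N : ℕ) (lam g A : ℝ) (ω : Fin N → Fin N → ℝ) (I : Fin N → ℝ)
    (x : Fin N → ℝ) : ℝ :=
  ∑ i, ((x i - A * I i) ^ 2 / 2 - g * x i * ∑ j, F lam (ω i j) * Real.sign (x j))

/-- On each open orthant (x_j ≠ 0 for all j), V is differentiable with
∂V/∂x_i = −(−x_i + g·Σ_j F(ω_ij)·sgn(x_j) + A·I_i): the Hopfield network with step
activation is the gradient system dx_i/dt = −∂V/∂x_i there. -/
theorem hopfield_step_activation_gradient_system (N : ℕ) (hN : 1 ≤ N) (lam g A : ℝ)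
    (hlam : 0 < lam) (hg : 0 < g) (ω : Fin N → Fin N → ℝ) (I : Fin N → ℝ) :
    ∀ x : Fin N → ℝ, (∀ j, x j ≠ 0) →
      DifferentiableAt ℝ (V N lam g A ω I) x ∧
      ∀ i, HasDerivAt (fun s => V N lam g A ω I (Function.update x i s))
        (-(-x i + g * ∑ j, F lam (ω i j) * Real.sign (x j) + A * I i)) (x i) := by
  intro x hx
  set C : Fin N → ℝ := fun k => ∑ j, F lam (ω k j) * Real.sign (x j) with hC
  have hsign : ∀ j : Fin N, ∀ᶠ t : ℝ in nhds (x j), Real.sign t = Real.sign (x j) := by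
    intro j
    rcases lt_or_gt_of_ne (hx j) with h | h
    · filter_upwards [eventually_lt_nhds h] with t ht
      rw [Real.sign_of_neg ht, Real.sign_of_neg h]
    · filter_upwards [eventually_gt_nhds h] with t ht
      rw [Real.sign_of_pos ht, Real.sign_of_pos h]
  have hVW : V N lam g A ω I =ᶠ[nhds x]
      fun y => ∑ k, ((y k - A * I k) ^ 2 / 2 - g * y k * C k) := by
    have h1 : ∀ᶠ y : Fin N → ℝ in nhds x, ∀ j, Real.sign (y j) = Real.sign (x j) := by
      rw [Filter.eventually_all]
      intro j
      exact ((continuous_apply j).tendsto x).eventually (hsign j)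
    filter_upwards [h1] with y hy
    unfold V
    exact Finset.sum_congr rfl fun k _ => by simp only [hy, hC]
  have hW : DifferentiableAt ℝ
      (fun y : Fin N → ℝ => ∑ k, ((y k - A * I k) ^ 2 / 2 - g * y k * C k)) x := by
    apply DifferentiableAt.fun_sum
    intro k _
    have hk : DifferentiableAt ℝ (fun y : Fin N → ℝ => y k) x :=
      (ContinuousLinearMap.proj k : (Fin N → ℝ) →L[ℝ] ℝ).differentiableAt
    have ha : DifferentiableAt ℝ (fun y : Fin N → ℝ => y k - A * I k) x := hk.sub_const _
    have hb : DifferentiableAt ℝ (fun y : Fin N → ℝ => (y k - A * I k) ^ 2) x := ha.pow 2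
    have h1 : DifferentiableAt ℝ (fun y : Fin N → ℝ => (y k - A * I k) ^ 2 / 2) x :=
      by simpa [div_eq_mul_inv] using hb.mul_const ((2:ℝ)⁻¹)
    exact h1.sub ((hk.const_mul g).mul_const (C k))
  constructor
  · exact hVW.differentiableAt_iff.mpr hW
  · intro i
    set G : ℝ → ℝ := fun s =>
      ∑ k, ((Function.update x i s k - A * I k) ^ 2 / 2
        - g * Function.update x i s k * C k) with hGdef
    have hGe : (fun s => V N lam g A ω I (Function.update x i s)) =ᶠ[nhds (x i)] G := by
      filter_upwards [hsign i] with s hs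
      unfold V
      have hsj : ∀ j, Real.sign (Function.update x i s j) = Real.sign (x j) := by
        intro j
        rcases eq_or_ne j i with rfl | hj
        · simp [hs]
        · simp [Function.update_of_ne hj]
      exact Finset.sum_congr rfl fun k _ => by simp only [hsj, hC, hGdef]
    have hG : HasDerivAt G
        (∑ k, (if k = i then x i - A * I i - g * C i else 0)) (x i) := by
      apply HasDerivAt.fun_sum
      intro k _
      rcases eq_or_ne k i with rfl | hk
      · simp only [Function.update_self, if_pos rfl]
        have h2 : HasDerivAt (fun s : ℝ => (s - A * I k) ^ 2 / 2) (x k - A * I k) (x k) := by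
          have h := (((hasDerivAt_id (x k)).sub_const (A * I k)).pow 2).div_const 2
          refine h.congr_deriv ?_
          simp only [id_eq, pow_one, Nat.cast_ofNat]
          ring
        have h3 : HasDerivAt (fun s : ℝ => g * s * C k) (g * C k) (x k) := by
          have h := ((hasDerivAt_id (x k)).const_mul g).mul_const (C k)
          refine h.congr_deriv ?_
          ring
        simpa using h2.fun_sub h3
      · simp only [Function.update_of_ne hk, if_neg hk]
        exact hasDerivAt_const _ _
    have hfinal := hG.congr_of_eventuallyEq hGe
    refine hfinal.congr_deriv ?_
    rw [Finset.sum_ite_eq' Finset.univ i (fun _ => x i - A * I i - g * C i)]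
    simp only [Finset.mem_univ, if_true, hC]
    ring
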